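/- Let M be a symmetric positive semidefinite n × n real matrix and C an m × n real matrix with full row rank (i.e., Cᵀ is injective), and assume M + CᵀC is positive definite (so M + ρCᵀC is invertible for every ρ > 0). Then the scaled Schur complement ρ·C(M + ρCᵀC)⁻¹Cᵀ converges to the m × m identity matrix as ρ → ∞. -/

import Mathlib

open Matrix Filter

/-- smul of a psd matrix by a nonneg real is psd. -/
private lemma psd_smul_aux {k : ℕ} {A : Matrix (Fin k) (Fin k) ℝ} (hA : A.PosSemidef)
    {r : ℝ} (hr : 0 ≤ r) : (r • A).PosSemidef := by
  refine Matrix.PosSemidef.of_dotProduct_mulVec_nonneg ?_ (fun x => ?_)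
  · show (r • A)ᴴ = r • A
    rw [conjTranspose_smul, hA.1.eq]
    simp
  · rw [Matrix.smul_mulVec, dotProduct_smul]
    exact mul_nonneg hr (hA.dotProduct_mulVec_nonneg x)

/-- Key quantitative bound on the entries of `M * (M + ρ CᵀC)⁻¹ * Cᵀ`. -/
private lemma key_bound_aux {n m : ℕ}
    {M : Matrix (Fin n) (Fin n) ℝ} {C : Matrix (Fin m) (Fin n) ℝ}
    (hM : M.PosSemidef) {ρ : ℝ} (hρ : 1 ≤ ρ)
    (hA : (M + ρ • (Cᵀ * C)).PosDef) (i : Fin n) (j : Fin m) :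
    |(M * (M + ρ • (Cᵀ * C))⁻¹ * Cᵀ) i j| ≤ Real.sqrt (M i i) * Real.sqrt ρ⁻¹ := by
  have hρ0 : (0:ℝ) < ρ := lt_of_lt_of_le one_pos hρ
  set A : Matrix (Fin n) (Fin n) ℝ := M + ρ • (Cᵀ * C) with hAdef
  set B : Matrix (Fin n) (Fin n) ℝ := A⁻¹ with hBdef
  have hdet : IsUnit A.det := isUnit_iff_ne_zero.2 hA.det_pos.ne'
  have hAB : A * B = 1 := Matrix.mul_nonsing_inv A hdet
  set c : Fin n → ℝ := fun k => Cᵀ k j with hcdef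
  set y : Fin n → ℝ := B *ᵥ c with hydef
  have hAy : A *ᵥ y = c := by
    rw [hydef, Matrix.mulVec_mulVec, hAB, Matrix.one_mulVec]
  set v : Fin m → ℝ := C *ᵥ y with hvdef
  set s : ℝ := v ⬝ᵥ v with hsdef
  set q : ℝ := y ⬝ᵥ (M *ᵥ y) with hqdef
  have hs0 : 0 ≤ s := by
    rw [hsdef]
    exact Finset.sum_nonneg fun k _ => mul_self_nonneg _
  have hq0 : 0 ≤ q := by
    have := hM.dotProduct_mulVec_nonneg y
    simpa using this
  -- y ⬝ᵥ c = q + ρ * s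
  have hyc : y ⬝ᵥ c = q + ρ * s := by
    conv_lhs => rw [← hAy]
    rw [hAdef, Matrix.add_mulVec, dotProduct_add, Matrix.smul_mulVec, dotProduct_smul]
    congr 1
    rw [smul_eq_mul]
    congr 1
    rw [← Matrix.mulVec_mulVec, Matrix.dotProduct_mulVec, Matrix.vecMul_transpose]
  -- y ⬝ᵥ c = v j
  have hyc2 : y ⬝ᵥ c = v j := by
    rw [hvdef, hcdef, dotProduct]
    simp [Matrix.mulVec, dotProduct, Matrix.transpose_apply, mul_comm]
  -- v j ≤ sqrt s
  have hvj : v j ≤ Real.sqrt s := by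
    have h1 : v j * v j ≤ s := by
      rw [hsdef, dotProduct]
      exact Finset.single_le_sum (f := fun k => v k * v k)
        (fun k _ => mul_self_nonneg _) (Finset.mem_univ j)
    calc v j ≤ |v j| := le_abs_self _
      _ = Real.sqrt (v j * v j) := (Real.sqrt_mul_self_eq_abs _).symm
      _ ≤ Real.sqrt s := Real.sqrt_le_sqrt h1
  have hρs : ρ * s ≤ Real.sqrt s := by
    have : q + ρ * s ≤ Real.sqrt s := by rw [← hyc, hyc2]; exact hvj
    linarith
  have hsqrts : Real.sqrt s ≤ ρ⁻¹ := by
    rcases eq_or_lt_of_le (Real.sqrt_nonneg s) with h | h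
    · rw [← h]; positivity
    · have hss : Real.sqrt s * Real.sqrt s = s := Real.mul_self_sqrt hs0
      have h1 : ρ * Real.sqrt s ≤ 1 := by nlinarith
      calc Real.sqrt s = ρ⁻¹ * (ρ * Real.sqrt s) := by field_simp
        _ ≤ ρ⁻¹ * 1 := mul_le_mul_of_nonneg_left h1 (by positivity)
        _ = ρ⁻¹ := mul_one _
  have hqle : q ≤ ρ⁻¹ := by
    have : q + ρ * s ≤ ρ⁻¹ := le_trans (by rw [← hyc, hyc2]; exact hvj) hsqrts
    nlinarith
  -- the matrix entry equals (M *ᵥ y) i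
  have hentry : (M * B * Cᵀ) i j = (M *ᵥ y) i := by
    have h1 : (M * B * Cᵀ) i j = ((M * B) *ᵥ c) i := by
      rw [Matrix.mul_apply, Matrix.mulVec, dotProduct]
    rw [h1, ← Matrix.mulVec_mulVec, ← hydef]
  -- Cauchy–Schwarz with sqrt factorization
  obtain ⟨S, hSsa, -, hSS⟩ := CFC.exists_sqrt_of_isSelfAdjoint_of_quasispectrumRestricts hM.1
    (open scoped MatrixOrder in QuasispectrumRestricts.nnreal_of_nonneg hM.nonneg)
  have hSsym : Sᵀ = S := by
    have := hSsa.star_eq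
    rwa [Matrix.star_eq_conjTranspose, Matrix.conjTranspose_eq_transpose_of_trivial] at this
  set u : Fin n → ℝ := S *ᵥ y with hudef
  have hMy : M *ᵥ y = S *ᵥ u := by
    conv_rhs => rw [hudef, Matrix.mulVec_mulVec, hSS]
  have hvm : ∀ x : Fin n → ℝ, x ᵥ* S = S *ᵥ x := by
    intro x
    conv_lhs => rw [← hSsym]
    rw [Matrix.vecMul_transpose]
  have huu : u ⬝ᵥ u = q := by
    rw [hudef, Matrix.dotProduct_mulVec, hvm, Matrix.mulVec_mulVec, hSS, dotProduct_comm]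
  have hrc : ∀ a b, S a b = S b a := by
    intro a b
    conv_lhs => rw [← hSsym]
    rw [Matrix.transpose_apply]
  have hrow : (∑ k, (S i k) ^ 2) = M i i := by
    rw [← hSS, Matrix.mul_apply]
    refine Finset.sum_congr rfl fun k _ => ?_
    rw [sq, hrc i k]
  have hCS : |(M *ᵥ y) i| ≤ Real.sqrt (M i i) * Real.sqrt q := by
    have h2 : (M *ᵥ y) i = ∑ k, S i k * u k := by
      rw [hMy]; rfl
    have hub : (∑ k, (u k) ^ 2) = q := by
      rw [← huu, dotProduct]; congr 1; ext k; rw [sq]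
    have hle1 : ∑ k, S i k * u k ≤ Real.sqrt (M i i) * Real.sqrt q := by
      have := Real.sum_mul_le_sqrt_mul_sqrt Finset.univ (fun k => S i k) (fun k => u k)
      rwa [hrow, hub] at this
    have hle2 : -(Real.sqrt (M i i) * Real.sqrt q) ≤ ∑ k, S i k * u k := by
      have h := Real.sum_mul_le_sqrt_mul_sqrt Finset.univ (fun k => -(S i k)) (fun k => u k)
      simp only [neg_mul, neg_sq] at h
      rw [Finset.sum_neg_distrib] at h
      rw [hrow, hub] at h
      linarith
    rw [h2]
    exact abs_le.2 ⟨hle2, hle1⟩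
  have hfinal : Real.sqrt q ≤ Real.sqrt ρ⁻¹ := Real.sqrt_le_sqrt hqle
  calc |(M * B * Cᵀ) i j| = |(M *ᵥ y) i| := by rw [hentry]
    _ ≤ Real.sqrt (M i i) * Real.sqrt q := hCS
    _ ≤ Real.sqrt (M i i) * Real.sqrt ρ⁻¹ :=
        mul_le_mul_of_nonneg_left hfinal (Real.sqrt_nonneg _)

/-- The vector in Euclidean space obtained by applying the matrix `M` to `x`
(matrix-vector multiplication, viewed as a map between Euclidean spaces). -/
noncomputable def mulVecE {ι κ : Type} [Fintype ι] [Fintype κ] [DecidableEq κ]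
    (M : Matrix ι κ ℝ) (x : EuclideanSpace ℝ κ) : EuclideanSpace ℝ ι :=
  Matrix.toEuclideanLin M x

/-- The spectral norm (Euclidean operator norm) of a matrix. -/
noncomputable def specNorm {ι κ : Type} [Fintype ι] [Fintype κ] [DecidableEq κ]
    (M : Matrix ι κ ℝ) : ℝ :=
  ‖LinearMap.toContinuousLinearMap (Matrix.toEuclideanLin M)‖

/-- For `M` positive semidefinite, `C` of full row rank, and `M + CᵀC` positive
definite, the scaled Schur complement `ρ·C(M + ρCᵀC)⁻¹Cᵀ` converges to the
identity as `ρ → ∞`. -/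
theorem stmt15 (n m : ℕ)
    (M : Matrix (Fin n) (Fin n) ℝ) (C : Matrix (Fin m) (Fin n) ℝ)
    (hM : M.PosSemidef)
    (hC : Function.Injective fun η : Fin m → ℝ => Cᵀ.mulVec η)
    (hMC : (M + Cᵀ * C).PosDef) :
    Filter.Tendsto (fun ρ : ℝ => ρ • (C * (M + ρ • (Cᵀ * C))⁻¹ * Cᵀ))
      Filter.atTop (nhds 1) := by
  have hT : (Cᵀ * C).PosSemidef := by
    have h := Matrix.posSemidef_conjTranspose_mul_self C
    rwa [Matrix.conjTranspose_eq_transpose_of_trivial] at h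
  have hApos : ∀ ρ : ℝ, 1 ≤ ρ → (M + ρ • (Cᵀ * C)).PosDef := by
    intro ρ hρ
    have he : M + ρ • (Cᵀ * C) = (M + Cᵀ * C) + (ρ - 1) • (Cᵀ * C) := by
      rw [sub_smul, one_smul]
      abel
    rw [he]
    exact hMC.add_posSemidef (psd_smul_aux hT (by linarith))
  have hCCt : (C * Cᵀ).PosDef := by
    refine Matrix.PosDef.of_dotProduct_mulVec_pos ?_ (fun x hx => ?_)
    · have h := Matrix.isHermitian_mul_conjTranspose_self C
      rwa [Matrix.conjTranspose_eq_transpose_of_trivial] at h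
    · have hne : Cᵀ *ᵥ x ≠ 0 := by
        intro h0
        apply hx
        apply hC
        simpa using h0
      have hpos : (0:ℝ) < (Cᵀ *ᵥ x) ⬝ᵥ (Cᵀ *ᵥ x) := by
        rcases lt_or_eq_of_le
          (Finset.sum_nonneg fun k _ => mul_self_nonneg ((Cᵀ *ᵥ x) k)) with h | h
        · exact h
        · exact absurd (dotProduct_self_eq_zero.mp h.symm) hne
      calc (0:ℝ) < (Cᵀ *ᵥ x) ⬝ᵥ (Cᵀ *ᵥ x) := hpos
        _ = star x ⬝ᵥ (C * Cᵀ) *ᵥ x := by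
            rw [Matrix.mulVec_transpose, star_trivial, ← Matrix.mulVec_mulVec,
              Matrix.dotProduct_mulVec, Matrix.mulVec_transpose]
  have hdetC : IsUnit (C * Cᵀ).det := isUnit_iff_ne_zero.2 hCCt.det_pos.ne'
  have hLCt : (C * Cᵀ)⁻¹ * C * Cᵀ = 1 := by
    rw [Matrix.mul_assoc]
    exact Matrix.nonsing_inv_mul _ hdetC
  have hkey : ∀ ρ : ℝ, 1 ≤ ρ →
      ρ • (C * (M + ρ • (Cᵀ * C))⁻¹ * Cᵀ)
        = 1 - (C * Cᵀ)⁻¹ * C * (M * (M + ρ • (Cᵀ * C))⁻¹ * Cᵀ) := by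
    intro ρ hρ
    set A := M + ρ • (Cᵀ * C) with hAdef
    set B := A⁻¹ with hBdef
    have hdet : IsUnit A.det := isUnit_iff_ne_zero.2 (hApos ρ hρ).det_pos.ne'
    have hAB : A * B = 1 := Matrix.mul_nonsing_inv A hdet
    have h2 : ρ • (Cᵀ * C * B) = 1 - M * B := by
      have h3 : M * B + (ρ • (Cᵀ * C)) * B = 1 := by
        rw [← Matrix.add_mul, ← hAdef]; exact hAB
      rw [smul_mul_assoc] at h3
      exact eq_sub_of_add_eq' h3
    have h4 : Cᵀ * (ρ • (C * B * Cᵀ)) = Cᵀ - M * B * Cᵀ := by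
      calc Cᵀ * (ρ • (C * B * Cᵀ)) = ρ • (Cᵀ * (C * B * Cᵀ)) := Matrix.mul_smul _ _ _
        _ = ρ • (Cᵀ * C * B * Cᵀ) := by rw [← Matrix.mul_assoc, ← Matrix.mul_assoc]
        _ = (ρ • (Cᵀ * C * B)) * Cᵀ := by rw [Matrix.smul_mul]
        _ = (1 - M * B) * Cᵀ := by rw [h2]
        _ = Cᵀ - M * B * Cᵀ := by rw [Matrix.sub_mul, Matrix.one_mul]
    calc ρ • (C * B * Cᵀ)
        = 1 * (ρ • (C * B * Cᵀ)) := (Matrix.one_mul _).symm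
      _ = ((C * Cᵀ)⁻¹ * C * Cᵀ) * (ρ • (C * B * Cᵀ)) := by rw [hLCt]
      _ = (C * Cᵀ)⁻¹ * C * (Cᵀ * (ρ • (C * B * Cᵀ))) := by rw [Matrix.mul_assoc]
      _ = (C * Cᵀ)⁻¹ * C * (Cᵀ - M * B * Cᵀ) := by rw [h4]
      _ = (C * Cᵀ)⁻¹ * C * Cᵀ - (C * Cᵀ)⁻¹ * C * (M * B * Cᵀ) := by rw [Matrix.mul_sub]
      _ = 1 - (C * Cᵀ)⁻¹ * C * (M * B * Cᵀ) := by rw [hLCt]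
  have hF : Filter.Tendsto (fun ρ : ℝ => M * (M + ρ • (Cᵀ * C))⁻¹ * Cᵀ) Filter.atTop
      (nhds (0 : Matrix (Fin n) (Fin m) ℝ)) := by
    refine tendsto_pi_nhds.2 ?_
    intro i
    rw [tendsto_pi_nhds]
    intro j
    have hb : Filter.Tendsto (fun ρ : ℝ => Real.sqrt (M i i) * Real.sqrt ρ⁻¹)
        Filter.atTop (nhds 0) := by
      have h1 : Filter.Tendsto (fun ρ : ℝ => ρ⁻¹) Filter.atTop (nhds (0:ℝ)) :=
        tendsto_inv_atTop_zero
      have h2 := (Real.continuous_sqrt.tendsto 0).comp h1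
      rw [Real.sqrt_zero] at h2
      have h3 := h2.const_mul (Real.sqrt (M i i))
      rw [mul_zero] at h3
      exact h3
    have h0 : ((0 : Matrix (Fin n) (Fin m) ℝ) i j) = (0:ℝ) := rfl
    rw [h0]
    refine squeeze_zero_norm' ?_ hb
    filter_upwards [Filter.eventually_ge_atTop (1:ℝ)] with ρ hρ
    rw [Real.norm_eq_abs]
    exact key_bound_aux hM hρ (hApos ρ hρ) i j
  have hφ : Continuous fun X : Matrix (Fin n) (Fin m) ℝ => (C * Cᵀ)⁻¹ * C * X :=
    Continuous.matrix_mul continuous_const continuous_id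
  have h1 := (hφ.tendsto 0).comp hF
  simp only [Function.comp_def] at h1
  rw [Matrix.mul_zero] at h1
  have h2 := Filter.Tendsto.const_sub (1 : Matrix (Fin m) (Fin m) ℝ) h1
  rw [sub_zero] at h2
  refine h2.congr' ?_
  filter_upwards [Filter.eventually_ge_atTop (1:ℝ)] with ρ hρ
  exact (hkey ρ hρ).symm
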